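/- Let Γ' be the subgroup of GL₃(ℤ) generated by the three matrices g₁ = [[1,-4,4],[0,-1,2],[0,0,1]], g₂ = [[1,0,0],[0,-1,0],[0,0,1]], g₃ = [[1,0,0],[2,-1,0],[4,-4,1]]. For an integer matrix M = [[α,β],[γ,δ]] with αδ−βγ = ±1, define ρ(M) = (1/(αδ−βγ))·[[α², 2αγ, γ²],[αβ, αδ+βγ, γδ],[β², 2βδ, δ²]] (a matrix with integer entries). Then ρ(M) ∈ Γ' if and only if αδ−βγ = 1 and both β and γ are even. (That is, the preimage of Γ̃ = Γ' ∩ SO_Δ(ℤ) under the spin homomorphism ρ: PGL₂(ℤ) → SO_Δ(ℤ) is exactly the principal congruence subgroup Λ(2) of PSL₂(ℤ).) -/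

import Mathlib

open Matrix

def gammaG1 : Matrix (Fin 3) (Fin 3) ℤ := !![1,-4,4; 0,-1,2; 0,0,1]
def gammaG2 : Matrix (Fin 3) (Fin 3) ℤ := !![1,0,0; 0,-1,0; 0,0,1]
def gammaG3 : Matrix (Fin 3) (Fin 3) ℤ := !![1,0,0; 2,-1,0; 4,-4,1]

/-- The group `Γ'`, generated by the three involutions `g₁, g₂, g₃`.
Since each generator is an involution, the submonoid they generate coincides
(as a set of matrices) with the group they generate. -/
def gammaPrime : Submonoid (Matrix (Fin 3) (Fin 3) ℤ) :=
  Submonoid.closure {gammaG1, gammaG2, gammaG3}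

/-- The spin homomorphism `ρ : PGL₂(ℤ) → SO_Δ(ℤ)` applied to `M = [[α,β],[γ,δ]]`
with `αδ - βγ = ±1`; since `1/(±1) = ±1`, the prefactor `1/(αδ-βγ)` is the
integer scalar `αδ - βγ`. -/
def spinRho (α β γ δ : ℤ) : Matrix (Fin 3) (Fin 3) ℤ :=
  (α * δ - β * γ) •
    !![α ^ 2, 2 * α * γ, γ ^ 2;
       α * β, α * δ + β * γ, γ * δ;
       β ^ 2, 2 * β * δ, δ ^ 2]

/-! ### Auxiliary algebraic identities for `spinRho` -/

lemma spinRho_mul (a b c d a' b' c' d' : ℤ) :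
    spinRho a b c d * spinRho a' b' c' d' =
      spinRho (a'*a+b'*c) (a'*b+b'*d) (c'*a+d'*c) (c'*b+d'*d) := by
  ext i j
  fin_cases i <;> fin_cases j <;>
    simp [spinRho, Matrix.mul_apply, Fin.sum_univ_three] <;> ring

lemma spinRho_one : spinRho 1 0 0 1 = 1 := by
  norm_num [spinRho]
  exact Matrix.one_fin_three.symm

lemma spinRho_neg (a b c d : ℤ) : spinRho (-a) (-b) (-c) (-d) = spinRho a b c d := by
  ext i j
  fin_cases i <;> fin_cases j <;> simp [spinRho] <;> ring

lemma det_spinRho (a b c d : ℤ) : (spinRho a b c d).det = (a*d-b*c)^6 := by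
  simp [spinRho, Matrix.det_fin_three]
  ring

lemma g2sq : gammaG2 * gammaG2 = 1 := by
  norm_num [gammaG2, Matrix.mul_fin_three]
  exact Matrix.one_fin_three.symm

lemma det_g2 : gammaG2.det = -1 := by
  norm_num [gammaG2, Matrix.det_fin_three]
  rfl

lemma swapg2 (a b c d : ℤ) :
    spinRho a b c d * gammaG2 = gammaG2 * spinRho a (-b) (-c) d := by
  ext i j
  fin_cases i <;> fin_cases j <;>
    simp [spinRho, gammaG2, Matrix.mul_apply, Fin.sum_univ_three, Matrix.vecHead,
      Matrix.vecTail, Function.comp] <;> ring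

lemma sT : spinRho 1 2 0 1 = gammaG3 * gammaG2 := by
  norm_num [spinRho, gammaG2, gammaG3, Matrix.mul_fin_three]

lemma sT' : spinRho 1 (-2) 0 1 = gammaG2 * gammaG3 := by
  norm_num [spinRho, gammaG2, gammaG3, Matrix.mul_fin_three]

lemma sL : spinRho 1 0 2 1 = gammaG1 * gammaG2 := by
  norm_num [spinRho, gammaG1, gammaG2, Matrix.mul_fin_three]

lemma sL' : spinRho 1 0 (-2) 1 = gammaG2 * gammaG1 := by
  norm_num [spinRho, gammaG1, gammaG2, Matrix.mul_fin_three]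

lemma g1eq : gammaG1 = gammaG2 * spinRho 1 0 (-2) 1 := by
  norm_num [spinRho, gammaG1, gammaG2, Matrix.mul_fin_three]

lemma g3eq : gammaG3 = gammaG2 * spinRho 1 (-2) 0 1 := by
  norm_num [spinRho, gammaG2, gammaG3, Matrix.mul_fin_three]

/-! ### Membership of generators and of the parabolic elements -/

lemma g1_mem : gammaG1 ∈ gammaPrime := Submonoid.subset_closure (by simp)
lemma g2_mem : gammaG2 ∈ gammaPrime := Submonoid.subset_closure (by simp)
lemma g3_mem : gammaG3 ∈ gammaPrime := Submonoid.subset_closure (by simp)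

lemma sT_mem : spinRho 1 2 0 1 ∈ gammaPrime := by
  rw [sT]; exact mul_mem g3_mem g2_mem
lemma sT'_mem : spinRho 1 (-2) 0 1 ∈ gammaPrime := by
  rw [sT']; exact mul_mem g2_mem g3_mem
lemma sL_mem : spinRho 1 0 2 1 ∈ gammaPrime := by
  rw [sL]; exact mul_mem g1_mem g2_mem
lemma sL'_mem : spinRho 1 0 (-2) 1 ∈ gammaPrime := by
  rw [sL']; exact mul_mem g2_mem g1_mem

lemma T_mem_nat (n : ℕ) :
    spinRho 1 (2*(n:ℤ)) 0 1 ∈ gammaPrime ∧ spinRho 1 (-(2*(n:ℤ))) 0 1 ∈ gammaPrime := by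
  induction n with
  | zero => simpa [spinRho_one] using gammaPrime.one_mem
  | succ n ih =>
    constructor
    · have e : spinRho 1 (2*(n:ℤ)) 0 1 * spinRho 1 2 0 1
          = spinRho 1 (2*(n:ℤ)+2) 0 1 := by
        rw [spinRho_mul]; norm_num
      push_cast
      rw [show (2*((n:ℤ)+1)) = 2*(n:ℤ)+2 by ring, ← e]
      exact mul_mem ih.1 sT_mem
    · have e : spinRho 1 (-(2*(n:ℤ))) 0 1 * spinRho 1 (-2) 0 1
          = spinRho 1 (-(2*(n:ℤ)) + -2) 0 1 := by
        rw [spinRho_mul]; norm_num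
      push_cast
      rw [show (-(2*((n:ℤ)+1))) = -(2*(n:ℤ)) + -2 by ring, ← e]
      exact mul_mem ih.2 sT'_mem

lemma T_mem (m : ℤ) : spinRho 1 (2*m) 0 1 ∈ gammaPrime := by
  rcases Int.natAbs_eq m with h | h
  · rw [h]; exact (T_mem_nat m.natAbs).1
  · rw [h, show 2 * -(m.natAbs:ℤ) = -(2*(m.natAbs:ℤ)) by ring]
    exact (T_mem_nat m.natAbs).2

lemma L_mem_nat (n : ℕ) :
    spinRho 1 0 (2*(n:ℤ)) 1 ∈ gammaPrime ∧ spinRho 1 0 (-(2*(n:ℤ))) 1 ∈ gammaPrime := by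
  induction n with
  | zero => simpa [spinRho_one] using gammaPrime.one_mem
  | succ n ih =>
    constructor
    · have e : spinRho 1 0 (2*(n:ℤ)) 1 * spinRho 1 0 2 1
          = spinRho 1 0 (2 + 2*(n:ℤ)) 1 := by
        rw [spinRho_mul]; norm_num
      push_cast
      rw [show (2*((n:ℤ)+1)) = 2 + 2*(n:ℤ) by ring, ← e]
      exact mul_mem ih.1 sL_mem
    · have e : spinRho 1 0 (-(2*(n:ℤ))) 1 * spinRho 1 0 (-2) 1
          = spinRho 1 0 (-2 + -(2*(n:ℤ))) 1 := by
        rw [spinRho_mul]; norm_num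
      push_cast
      rw [show (-(2*((n:ℤ)+1))) = -2 + -(2*(n:ℤ)) by ring, ← e]
      exact mul_mem ih.2 sL'_mem

lemma L_mem (m : ℤ) : spinRho 1 0 (2*m) 1 ∈ gammaPrime := by
  rcases Int.natAbs_eq m with h | h
  · rw [h]; exact (L_mem_nat m.natAbs).1
  · rw [h, show 2 * -(m.natAbs:ℤ) = -(2*(m.natAbs:ℤ)) by ring]
    exact (L_mem_nat m.natAbs).2

/-! ### The Euclidean reduction lemma -/

lemma exists_red (a b : ℤ) (hb : b ≠ 0) (hpar : a % 2 ≠ b % 2) :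
    ∃ k : ℤ, (a + 2*k*b).natAbs < b.natAbs := by
  rcases hb.lt_or_gt with hneg | hpos
  · have h2b : (0:ℤ) < 2*(-b) := by linarith
    set n := 2*(-b) with hn
    have hr0 : 0 ≤ a % n := Int.emod_nonneg a (by positivity)
    have hr1 : a % n < n := Int.emod_lt_of_pos a h2b
    have hrd : a % n = a - n * (a / n) := Int.emod_def a n
    have hrp : a % n % 2 = a % 2 := Int.emod_emod_of_dvd a ⟨-b, hn⟩
    by_cases hlt : a % n < -b
    · refine ⟨a / n, ?_⟩
      have : a + 2*(a/n)*b = a % n := by rw [hrd]; ring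
      omega
    · refine ⟨a / n + 1, ?_⟩
      have : a + 2*(a/n + 1)*b = a % n - n := by rw [hrd]; ring
      omega
  · have h2b : (0:ℤ) < 2*b := by linarith
    set n := 2*b with hn
    have hr0 : 0 ≤ a % n := Int.emod_nonneg a (by positivity)
    have hr1 : a % n < n := Int.emod_lt_of_pos a h2b
    have hrd : a % n = a - n * (a / n) := Int.emod_def a n
    have hrp : a % n % 2 = a % 2 := Int.emod_emod_of_dvd a ⟨b, hn⟩
    by_cases hlt : a % n < b
    · refine ⟨-(a / n), ?_⟩
      have : a + 2*(-(a/n))*b = a % n := by rw [hrd]; ring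
      omega
    · refine ⟨-(a / n) - 1, ?_⟩
      have : a + 2*(-(a/n) - 1)*b = a % n - n := by rw [hrd]; ring
      omega

/-! ### Reverse direction: every Λ(2) element maps into Γ' -/

lemma key (n : ℕ) : ∀ α β γ δ : ℤ, α.natAbs + γ.natAbs ≤ n →
    α * δ - β * γ = 1 → 2 ∣ β → 2 ∣ γ → spinRho α β γ δ ∈ gammaPrime := by
  induction n with
  | zero =>
    intro α β γ δ hle hdet hβ hγ
    have hα : α = 0 := by omega
    have hγ0 : γ = 0 := by omega
    rw [hα, hγ0] at hdet; simp at hdet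
  | succ n ih =>
    intro α β γ δ hle hdet hβ hγ
    have hαodd : ¬ (2:ℤ) ∣ α := by
      intro hα
      have h1 : (2:ℤ) ∣ α * δ := hα.mul_right δ
      have h2 : (2:ℤ) ∣ β * γ := hγ.mul_left β
      have : (2:ℤ) ∣ 1 := hdet ▸ dvd_sub h1 h2
      norm_num at this
    by_cases hγ0 : γ = 0
    · subst hγ0
      have hαδ : α * δ = 1 := by linarith
      obtain ⟨m, hm⟩ := hβ
      rcases Int.mul_eq_one_iff_eq_one_or_neg_one.mp hαδ with ⟨h1, h2⟩ | ⟨h1, h2⟩ <;>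
        subst h1 h2 hm
      · exact T_mem m
      · have hneg : spinRho (-1) (2*m) 0 (-1) = spinRho 1 (2*(-m)) 0 1 := by
          have := spinRho_neg 1 (-(2*m)) 0 1
          simp only [neg_neg, neg_zero] at this
          rw [this]; norm_num
        rw [hneg]; exact T_mem (-m)
    · have hα0 : α ≠ 0 := fun h => hαodd (by rw [h]; exact ⟨0, rfl⟩)
      have hpar : γ % 2 ≠ α % 2 := by omega
      have hparα : α % 2 ≠ γ % 2 := by omega
      rcases Nat.lt_or_ge α.natAbs γ.natAbs with hlt | hge
      · -- |α| < |γ| : reduce γ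
        obtain ⟨k, hk⟩ := exists_red γ α hα0 hpar
        have hdet' : α * (δ + 2*k*β) - β * (γ + 2*k*α) = 1 := by linear_combination hdet
        have hmem1 : spinRho α β (γ + 2*k*α) (δ + 2*k*β) ∈ gammaPrime := by
          refine ih _ _ _ _ (by omega) hdet' hβ (dvd_add hγ ⟨k*α, by ring⟩)
        have hL : spinRho 1 0 (-(2*k)) 1 ∈ gammaPrime := by
          have := L_mem (-k); rwa [show (2*(-k):ℤ) = -(2*k) by ring] at this
        have hc := spinRho_mul α β (γ+2*k*α) (δ+2*k*β) 1 0 (-(2*k)) 1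
        rw [show (1*α+0*(γ+2*k*α) : ℤ) = α by ring,
            show (1*β+0*(δ+2*k*β) : ℤ) = β by ring,
            show (-(2*k)*α+1*(γ+2*k*α) : ℤ) = γ by ring,
            show (-(2*k)*β+1*(δ+2*k*β) : ℤ) = δ by ring] at hc
        rw [← hc]
        exact mul_mem hmem1 hL
      · -- |γ| < |α| : reduce α
        have hlt2 : γ.natAbs < α.natAbs := by omega
        obtain ⟨k, hk⟩ := exists_red α γ hγ0 hparα
        have hdet' : (α + 2*k*γ) * δ - (β + 2*k*δ) * γ = 1 := by linear_combination hdet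
        have hmem1 : spinRho (α + 2*k*γ) (β + 2*k*δ) γ δ ∈ gammaPrime := by
          refine ih _ _ _ _ (by omega) hdet' (dvd_add hβ ⟨k*δ, by ring⟩) hγ
        have hT : spinRho 1 (-(2*k)) 0 1 ∈ gammaPrime := by
          have := T_mem (-k); rwa [show (2*(-k):ℤ) = -(2*k) by ring] at this
        have hc := spinRho_mul (α+2*k*γ) (β+2*k*δ) γ δ 1 (-(2*k)) 0 1
        rw [show (1*(α+2*k*γ)+(-(2*k))*γ : ℤ) = α by ring,
            show (1*(β+2*k*δ)+(-(2*k))*δ : ℤ) = β by ring,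
            show (0*(α+2*k*γ)+1*γ : ℤ) = γ by ring,
            show (0*(β+2*k*δ)+1*δ : ℤ) = δ by ring] at hc
        rw [← hc]
        exact mul_mem hmem1 hT

/-! ### Forward direction: invariant for elements of Γ' -/

lemma gammaPrime_form : ∀ x ∈ gammaPrime, ∃ a b c d : ℤ, a*d - b*c = 1 ∧ 2 ∣ b ∧ 2 ∣ c ∧
    (x = spinRho a b c d ∨ x = gammaG2 * spinRho a b c d) := by
  intro x hx
  refine Submonoid.closure_induction ?_ ?_ ?_ hx
  · rintro y hy
    simp only [Set.mem_insert_iff, Set.mem_singleton_iff] at hy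
    rcases hy with rfl | rfl | rfl
    · exact ⟨1, 0, -2, 1, by norm_num, ⟨0, by ring⟩, ⟨-1, by ring⟩, Or.inr g1eq⟩
    · exact ⟨1, 0, 0, 1, by norm_num, ⟨0, by ring⟩, ⟨0, by ring⟩,
        Or.inr (by rw [spinRho_one, mul_one])⟩
    · exact ⟨1, -2, 0, 1, by norm_num, ⟨-1, by ring⟩, ⟨0, by ring⟩, Or.inr g3eq⟩
  · exact ⟨1, 0, 0, 1, by norm_num, ⟨0, by ring⟩, ⟨0, by ring⟩, Or.inl spinRho_one.symm⟩
  · rintro y z hy hz ⟨a, b, c, d, h1, hb, hc, hye⟩ ⟨a', b', c', d', h1', hb', hc', hze⟩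
    rcases hye with hy1 | hy2 <;> rcases hze with hz1 | hz2
    · refine ⟨a'*a+b'*c, a'*b+b'*d, c'*a+d'*c, c'*b+d'*d,
        by linear_combination (a'*d'-b'*c')*h1 + h1',
        dvd_add (hb.mul_left a') (hb'.mul_right d),
        dvd_add (hc'.mul_right a) (hc.mul_left d'), Or.inl ?_⟩
      rw [hy1, hz1, spinRho_mul]
    · refine ⟨a'*a+b'*(-c), a'*(-b)+b'*d, c'*a+d'*(-c), c'*(-b)+d'*d,
        by linear_combination (a'*d'-b'*c')*h1 + h1',
        dvd_add ((dvd_neg.mpr hb).mul_left a') (hb'.mul_right d),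
        dvd_add (hc'.mul_right a) ((dvd_neg.mpr hc).mul_left d'), Or.inr ?_⟩
      rw [hy1, hz2, ← mul_assoc, swapg2, mul_assoc, spinRho_mul]
    · refine ⟨a'*a+b'*c, a'*b+b'*d, c'*a+d'*c, c'*b+d'*d,
        by linear_combination (a'*d'-b'*c')*h1 + h1',
        dvd_add (hb.mul_left a') (hb'.mul_right d),
        dvd_add (hc'.mul_right a) (hc.mul_left d'), Or.inr ?_⟩
      rw [hy2, hz1, mul_assoc, spinRho_mul]
    · refine ⟨a'*a+b'*(-c), a'*(-b)+b'*d, c'*a+d'*(-c), c'*(-b)+d'*d,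
        by linear_combination (a'*d'-b'*c')*h1 + h1',
        dvd_add ((dvd_neg.mpr hb).mul_left a') (hb'.mul_right d),
        dvd_add (hc'.mul_right a) ((dvd_neg.mpr hc).mul_left d'), Or.inl ?_⟩
      have e : (gammaG2 * spinRho a b c d) * (gammaG2 * spinRho a' b' c' d')
          = spinRho a (-b) (-c) d * spinRho a' b' c' d' := by
        rw [mul_assoc, ← mul_assoc (spinRho a b c d), swapg2, ← mul_assoc, ← mul_assoc,
          g2sq, one_mul]
      rw [hy2, hz2, e, spinRho_mul]

/-! ### The main theorem -/

theorem preimage_of_gammaPrime_is_lambda_two (α β γ δ : ℤ)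
    (hdet : α * δ - β * γ = 1 ∨ α * δ - β * γ = -1) :
    spinRho α β γ δ ∈ gammaPrime ↔ (α * δ - β * γ = 1 ∧ 2 ∣ β ∧ 2 ∣ γ) := by
  constructor
  · intro hmem
    obtain ⟨a, b, c, d, h1, hb, hc, hcase⟩ := gammaPrime_form _ hmem
    rcases hcase with h | h
    · have h20 := congrFun (congrFun h 2) 0
      have h02 := congrFun (congrFun h 0) 2
      have h00 := congrFun (congrFun h 0) 0
      simp only [spinRho, Matrix.smul_apply, Matrix.cons_val_zero, Matrix.cons_val_one,
        Matrix.cons_val_two, Matrix.head_cons, Matrix.head_fin_const, smul_eq_mul,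
        Matrix.cons_val', Matrix.empty_val', Matrix.cons_val_fin_one, Matrix.tail_cons,
        Matrix.of_apply, h1, one_mul] at h20 h02 h00
      rcases hdet with he | he
      · refine ⟨he, ?_, ?_⟩
        · rw [he, one_mul] at h20
          have h2 : (2:ℤ) ∣ β^2 := by
            obtain ⟨t, ht⟩ := hb
            exact ⟨2*t^2, by rw [h20, ht]; ring⟩
          exact Int.prime_two.dvd_of_dvd_pow h2
        · rw [he, one_mul] at h02
          have h2 : (2:ℤ) ∣ γ^2 := by
            obtain ⟨t, ht⟩ := hc
            exact ⟨2*t^2, by rw [h02, ht]; ring⟩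
          exact Int.prime_two.dvd_of_dvd_pow h2
      · exfalso
        rw [he] at h00 h20
        have ha : a = 0 := by nlinarith [sq_nonneg a, sq_nonneg α]
        have hb0 : b = 0 := by nlinarith [sq_nonneg b, sq_nonneg β]
        rw [ha, hb0] at h1
        simp at h1
    · exfalso
      have hd := congrArg Matrix.det h
      rw [det_spinRho, Matrix.det_mul, det_g2, det_spinRho, h1] at hd
      rcases hdet with he | he <;> rw [he] at hd <;> norm_num at hd
  · rintro ⟨h1, hb, hc⟩
    exact key (α.natAbs + γ.natAbs) α β γ δ le_rfl h1 hb hc
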